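/- Let Ψ be a logarithmic growth function satisfying condition (⋆). Then there is a constant C>0 such that Ψ''(y) ≤ C·[Ψ'(y)]² for all y≥0; equivalently, Φ(t) ≳ t^{1/2}[Φ'(t)]^{1/2} as t→∞. -/

import Mathlib

open MeasureTheory Filter Asymptotics Set
open scoped ENNReal

noncomputable section

namespace FockHankel

variable {n : ℕ}

/-- Squared Euclidean norm `|z|²` on `ℂⁿ`. -/
def nsq (z : Fin n → ℂ) : ℝ := ∑ j, Complex.normSq (z j)

/-- The pairing `⟨z,w⟩ = ∑ j, z j * conj (w j)`. -/
def ip (z w : Fin n → ℂ) : ℂ := ∑ j, z j * (starRingEnd ℂ) (w j)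

/-- A logarithmic growth function: a `C³` function with `Ψ' > 0`, `Ψ'' ≥ 0`, `Ψ''' ≥ 0`
(and `Ψ ≥ 0`) on `[0,∞)`. -/
structure IsLogGrowth (Ψ : ℝ → ℝ) : Prop where
  contDiff : ContDiff ℝ 3 Ψ
  nonneg : ∀ x : ℝ, 0 ≤ x → 0 ≤ Ψ x
  deriv_pos : ∀ x : ℝ, 0 ≤ x → 0 < deriv Ψ x
  deriv2_nonneg : ∀ x : ℝ, 0 ≤ x → 0 ≤ deriv (deriv Ψ) x
  deriv3_nonneg : ∀ x : ℝ, 0 ≤ x → 0 ≤ deriv (deriv (deriv Ψ)) x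

/-- `Φ(x) = x Ψ'(x)`. -/
def Phi (Ψ : ℝ → ℝ) : ℝ → ℝ := fun x => x * deriv Ψ x

/-- Condition (⋆) with exponent `η`: `Φ''(t) = O(t^{-1/2} [Φ'(t)]^{1+η})` as `t → ∞`. -/
def StarCond (Ψ : ℝ → ℝ) (η : ℝ) : Prop :=
  (fun t : ℝ => deriv (deriv (Phi Ψ)) t) =O[atTop]
    fun t : ℝ => t ^ (-(1:ℝ)/2) * deriv (Phi Ψ) t ^ (1 + η)

/-- Condition (⋆⋆) with exponent `η`: `Ψ''(t) = O(t^{-1/2} [Ψ'(t)]^{1+η})` as `t → ∞`. -/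
def StarStarCond (Ψ : ℝ → ℝ) (η : ℝ) : Prop :=
  (fun t : ℝ => deriv (deriv Ψ) t) =O[atTop]
    fun t : ℝ => t ^ (-(1:ℝ)/2) * deriv Ψ t ^ (1 + η)

/-- The moments `s_d = ∫₀^∞ x^d e^{-Ψ(x)} dx`. -/
def sMom (Ψ : ℝ → ℝ) (d : ℕ) : ℝ := ∫ x in Ioi (0:ℝ), x ^ d * Real.exp (-(Ψ x))

/-- `F_s(ζ) = ∑ ζ^d / s_d`. -/
def Fs (Ψ : ℝ → ℝ) (ζ : ℂ) : ℂ := ∑' d : ℕ, ζ ^ d / (sMom Ψ d : ℂ)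

/-- The Bergman kernel `K_Ψ(z,w) = F_s^{(n-1)}(⟨z,w⟩)/(n-1)!`. -/
def K (Ψ : ℝ → ℝ) (n : ℕ) (z w : Fin n → ℂ) : ℂ :=
  (Nat.factorial (n - 1) : ℂ)⁻¹ * iteratedDeriv (n - 1) (Fs Ψ) (ip z w)

/-- The measure `dμ_Ψ = e^{-Ψ(|z|²)} dV`. -/
def fockMeasure (Ψ : ℝ → ℝ) (n : ℕ) : Measure (Fin n → ℂ) :=
  volume.withDensity fun z => ENNReal.ofReal (Real.exp (-(Ψ (nsq z))))

/-- `Λ_Ψ(z) = log K_Ψ(z,z)`. -/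
def LogK (Ψ : ℝ → ℝ) (n : ℕ) : (Fin n → ℂ) → ℝ := fun z => Real.log (K Ψ n z z).re

/-- The squared Bergman metric `β²(z,ξ) = ∑_{j,k} ∂²Λ_Ψ/∂z_j∂z̄_k ξ_j ξ̄_k`, expressed as the
Levi form of `Λ_Ψ`, i.e. one fourth of the sum of the real second derivatives in the
directions `ξ` and `iξ`. -/
def BergSq (Ψ : ℝ → ℝ) (n : ℕ) (z ξ : Fin n → ℂ) : ℝ :=
  (iteratedFDeriv ℝ 2 (LogK Ψ n) z ![ξ, ξ]
    + iteratedFDeriv ℝ 2 (LogK Ψ n) z ![Complex.I • ξ, Complex.I • ξ]) / 4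

/-- The Bergman metric `β(z,ξ)`. -/
def Bmet (Ψ : ℝ → ℝ) (n : ℕ) (z ξ : Fin n → ℂ) : ℝ := Real.sqrt (BergSq Ψ n z ξ)

/-- A piecewise `C¹`-smooth curve on `[0,1]`. -/
def PiecewiseC1 (γ : ℝ → (Fin n → ℂ)) : Prop :=
  ∃ (k : ℕ) (t : Fin (k + 1) → ℝ), t 0 = 0 ∧ t (Fin.last k) = 1 ∧ StrictMono t ∧
    ∀ i : Fin k, ContDiffOn ℝ 1 γ (Icc (t i.castSucc) (t i.succ))

/-- The Bergman distance `ϱ(z,w)`. -/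
def Bdist (Ψ : ℝ → ℝ) (n : ℕ) (z w : Fin n → ℂ) : ℝ :=
  sInf { L : ℝ | ∃ γ : ℝ → (Fin n → ℂ), PiecewiseC1 γ ∧ γ 0 = z ∧ γ 1 = w ∧
    L = ∫ s in (0:ℝ)..1, Bmet Ψ n (γ s) (deriv γ s) }

/-- The Bergman ball `B(z,a)`. -/
def Bball (Ψ : ℝ → ℝ) (n : ℕ) (z : Fin n → ℂ) (a : ℝ) : Set (Fin n → ℂ) :=
  { w | Bdist Ψ n z w < a }

/-- Berezin transform of a real-valued function. -/
def berezinR (Ψ : ℝ → ℝ) (n : ℕ) (g : (Fin n → ℂ) → ℝ) (z : Fin n → ℂ) : ℝ :=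
  (∫ w, g w * ‖K Ψ n z w‖ ^ 2 ∂(fockMeasure Ψ n)) / (K Ψ n z z).re

/-- Berezin transform of a complex-valued function. -/
def berezinC (Ψ : ℝ → ℝ) (n : ℕ) (f : (Fin n → ℂ) → ℂ) (z : Fin n → ℂ) : ℂ :=
  (∫ w, f w * ((‖K Ψ n z w‖ ^ 2 : ℝ) : ℂ) ∂(fockMeasure Ψ n)) / K Ψ n z z

/-- `MO f(z) = ((|f|²)~(z) - |f̃(z)|²)^{1/2}`. -/
def MO (Ψ : ℝ → ℝ) (n : ℕ) (f : (Fin n → ℂ) → ℂ) (z : Fin n → ℂ) : ℝ :=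
  Real.sqrt (berezinR Ψ n (fun w => Complex.normSq (f w)) z
    - Complex.normSq (berezinC Ψ n f z))

/-- `f ∈ BMOA(Ψ)`: `f` entire, `(|f|²)~(z)` finite for every `z`, and `sup_z MO f(z) < ∞`. -/
def InBMOA (Ψ : ℝ → ℝ) (n : ℕ) (f : (Fin n → ℂ) → ℂ) : Prop :=
  Differentiable ℂ f ∧
  (∀ z, Integrable (fun w => Complex.normSq (f w) * ‖K Ψ n z w‖ ^ 2)
    (fockMeasure Ψ n)) ∧
  ∃ C : ℝ, ∀ z, MO Ψ n f z ≤ C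

/-- `f ∈ ℬ(Ψ)`: `f` entire with `sup_z sup_{ξ≠0} |⟨∇f(z),ξ̄⟩|/β(z,ξ) < ∞`; here
`⟨∇f(z),ξ̄⟩ = ∑_j (∂f/∂z_j)(z) ξ_j` is the complex derivative of `f` at `z` along `ξ`. -/
def InBloch (Ψ : ℝ → ℝ) (n : ℕ) (f : (Fin n → ℂ) → ℂ) : Prop :=
  Differentiable ℂ f ∧
  ∃ C : ℝ, ∀ z ξ, ξ ≠ 0 → ‖fderiv ℂ f z ξ‖ ≤ C * Bmet Ψ n z ξ

/-- Holomorphic polynomials on `ℂⁿ`. -/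
def IsHolPoly (φ : (Fin n → ℂ) → ℂ) : Prop :=
  ∃ p : MvPolynomial (Fin n) ℂ, φ = fun z => MvPolynomial.eval z p

/-- The Hankel operator with symbol `f̄` applied to `φ`. -/
def hankel (Ψ : ℝ → ℝ) (n : ℕ) (f φ : (Fin n → ℂ) → ℂ) (z : Fin n → ℂ) : ℂ :=
  ∫ w, K Ψ n z w * φ w * ((starRingEnd ℂ) (f z) - (starRingEnd ℂ) (f w)) ∂(fockMeasure Ψ n)

/-- `f ∈ 𝒯(Ψ)`. -/
def InClassT (Ψ : ℝ → ℝ) (n : ℕ) (f : (Fin n → ℂ) → ℂ) : Prop :=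
  MemLp f 2 (fockMeasure Ψ n) ∧
  (∀ φ, IsHolPoly φ → ∀ z,
    Integrable (fun w => f w * φ w * K Ψ n z w) (fockMeasure Ψ n)) ∧
  ∀ φ, IsHolPoly φ → MemLp (hankel Ψ n f φ) 2 (fockMeasure Ψ n)

/-- The Hankel operator `H_{f̄}` is bounded on holomorphic polynomials. -/
def HankelBounded (Ψ : ℝ → ℝ) (n : ℕ) (f : (Fin n → ℂ) → ℂ) : Prop :=
  ∃ C : ℝ, ∀ φ, IsHolPoly φ →
    eLpNorm (hankel Ψ n f φ) 2 (fockMeasure Ψ n)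
      ≤ ENNReal.ofReal C * eLpNorm φ 2 (fockMeasure Ψ n)


/-- `θ₀(r) = [r Φ'(r)]^{-1/2}`. -/
def theta0 (Ψ : ℝ → ℝ) (r : ℝ) : ℝ := (r * deriv (Phi Ψ) r) ^ (-(1:ℝ)/2)

/-- The inverse of `Φ` on `[0,∞)`. -/
def PhiInv (Ψ : ℝ → ℝ) (t : ℝ) : ℝ := sInf {x : ℝ | 0 ≤ x ∧ t ≤ Phi Ψ x}

/-- `h_t(x) = -t log x + Ψ(x) - (-t log Φ⁻¹(t) + Ψ(Φ⁻¹(t)))`. -/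
def hCrit (Ψ : ℝ → ℝ) (t x : ℝ) : ℝ :=
  -t * Real.log x + Ψ x - (-t * Real.log (PhiInv Ψ t) + Ψ (PhiInv Ψ t))

/-- `I(t) = ∫₀^∞ e^{-h_t(x)} dx`. -/
def Ifun (Ψ : ℝ → ℝ) (t : ℝ) : ℝ := ∫ x in Ioi (0:ℝ), Real.exp (-(hCrit Ψ t x))

/-- `Q_x(r) = ½(Ψ(r²)+Ψ(x²)) - Ψ(xr)`. -/
def Qfun (Ψ : ℝ → ℝ) (x r : ℝ) : ℝ := (Ψ (r ^ 2) + Ψ (x ^ 2)) / 2 - Ψ (x * r)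

/-- The Taylor coefficients `c_d = (d+1)⋯(d+n-1)/((n-1)!·s_{d+n-1})` of `k`. -/
def cCoef (Ψ : ℝ → ℝ) (n d : ℕ) : ℝ :=
  (∏ j ∈ Finset.range (n - 1), ((d : ℝ) + 1 + (j : ℝ))) /
    ((Nat.factorial (n - 1) : ℝ) * sMom Ψ (d + (n - 1)))

/-- `k(r) = ∑_d c_d r^d`, so that `K_Ψ(z,z) = k(|z|²)`. -/
def kFun (Ψ : ℝ → ℝ) (n : ℕ) (r : ℝ) : ℝ := ∑' d : ℕ, cCoef Ψ n d * r ^ d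

/-- Orthogonal projection of `ℂⁿ` onto the complex line `ℂ z` (the identity if `z = 0`). -/
def Pproj (z w : Fin n → ℂ) : Fin n → ℂ :=
  if z = 0 then w else (ip w z / (nsq z : ℂ)) • z

/-- The ellipsoid `D(z,a)`. -/
def Dset (Ψ : ℝ → ℝ) (n : ℕ) (z : Fin n → ℂ) (a : ℝ) : Set (Fin n → ℂ) :=
  { w | Real.sqrt (nsq (z - Pproj z w)) ≤ a * deriv (Phi Ψ) (nsq z) ^ (-(1:ℝ)/2)
      ∧ Real.sqrt (nsq (w - Pproj z w)) ≤ a * deriv Ψ (nsq z) ^ (-(1:ℝ)/2) }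

/-- `r` is a covering radius for the sequence `(a_k)`: the balls `B(a_k,r)` cover `ℂⁿ` and
the balls `B(a_k,r/2)` are pairwise disjoint. -/
def IsCovRadius (Ψ : ℝ → ℝ) (n : ℕ) (a : ℕ → Fin n → ℂ) (r : ℝ) : Prop :=
  0 < r ∧ (∀ z, ∃ k, z ∈ Bball Ψ n (a k) r) ∧
    ∀ j k, j ≠ k → Disjoint (Bball Ψ n (a j) (r / 2)) (Bball Ψ n (a k) (r / 2))

/-- A `Ψ`-lattice: a sequence of distinct points admitting a covering radius. -/
def IsPsiLattice (Ψ : ℝ → ℝ) (n : ℕ) (a : ℕ → Fin n → ℂ) : Prop :=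
  Function.Injective a ∧ ∃ r, IsCovRadius Ψ n a r

/-- `r` is the maximal covering radius for `(a_k)`. -/
def IsMaxCovRadius (Ψ : ℝ → ℝ) (n : ℕ) (a : ℕ → Fin n → ℂ) (r : ℝ) : Prop :=
  IsCovRadius Ψ n a r ∧ ∀ r', IsCovRadius Ψ n a r' → r' ≤ r

/-- Membership in the Fock space `𝒜²(Ψ)`: `f` is entire, square-integrable, and lies in the
`L²(μ_Ψ)`-closure of the holomorphic polynomials. -/
def InA2 (Ψ : ℝ → ℝ) (n : ℕ) (f : (Fin n → ℂ) → ℂ) : Prop :=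
  Differentiable ℂ f ∧ MemLp f 2 (fockMeasure Ψ n) ∧
    ∀ ε : ℝ≥0∞, 0 < ε → ∃ φ, IsHolPoly φ ∧ eLpNorm (f - φ) 2 (fockMeasure Ψ n) < ε

/-- `H(z,w) = ϱ(z,w)|K_Ψ(z,w)|e^{-(Ψ(|z|²)+Ψ(|w|²))/2}`. -/
def Hker (Ψ : ℝ → ℝ) (n : ℕ) (z w : Fin n → ℂ) : ℝ :=
  Bdist Ψ n z w * ‖K Ψ n z w‖ * Real.exp (-(Ψ (nsq z) + Ψ (nsq w)) / 2)

/-- The set of `Lp`-classes of holomorphic polynomials. -/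
def polyLp (Ψ : ℝ → ℝ) (n : ℕ) : Set (Lp ℂ 2 (fockMeasure Ψ n)) :=
  {g | ∃ (φ : (Fin n → ℂ) → ℂ) (h : MemLp φ 2 (fockMeasure Ψ n)), IsHolPoly φ ∧ g = h.toLp φ}

/-- The Fock space `𝒜²(Ψ)` as the closure of the holomorphic polynomials in `L²(μ_Ψ)`. -/
def A2 (Ψ : ℝ → ℝ) (n : ℕ) : Submodule ℂ (Lp ℂ 2 (fockMeasure Ψ n)) :=
  (Submodule.span ℂ (polyLp Ψ n)).topologicalClosure

/-- The continuous extension of `H_{f̄}` from `𝒜²(Ψ)` to `L²(μ_Ψ)` is a compact operator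
(equivalently, some compact operator on `L²(μ_Ψ)` agrees with `H_{f̄}` on the holomorphic
polynomials). -/
def HankelCompact (Ψ : ℝ → ℝ) (n : ℕ) (f : (Fin n → ℂ) → ℂ) : Prop :=
  ∃ T : Lp ℂ 2 (fockMeasure Ψ n) →L[ℂ] Lp ℂ 2 (fockMeasure Ψ n),
    IsCompactOperator T ∧
    ∀ (φ : (Fin n → ℂ) → ℂ), IsHolPoly φ →
      ∀ (hφ : MemLp φ 2 (fockMeasure Ψ n)) (hH : MemLp (hankel Ψ n f φ) 2 (fockMeasure Ψ n)),
        T (hφ.toLp φ) = hH.toLp (hankel Ψ n f φ)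

/-- `f ∈ VMOA(Ψ)`: `f ∈ BMOA(Ψ)` and `MO f(z) → 0` as `|z| → ∞`. -/
def InVMOA (Ψ : ℝ → ℝ) (n : ℕ) (f : (Fin n → ℂ) → ℂ) : Prop :=
  InBMOA Ψ n f ∧
    ∀ ε : ℝ, 0 < ε → ∃ R : ℝ, ∀ z, R ≤ Real.sqrt (nsq z) → MO Ψ n f z ≤ ε

/-- `f ∈ ℬ₀(Ψ)`: `f ∈ ℬ(Ψ)` and `sup_{ξ≠0}|⟨∇f(z),ξ̄⟩|/β(z,ξ) → 0` as `|z| → ∞`. -/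
def InLittleBloch (Ψ : ℝ → ℝ) (n : ℕ) (f : (Fin n → ℂ) → ℂ) : Prop :=
  InBloch Ψ n f ∧
    ∀ ε : ℝ, 0 < ε → ∃ R : ℝ, ∀ z, R ≤ Real.sqrt (nsq z) →
      ∀ ξ, ξ ≠ 0 → ‖fderiv ℂ f z ξ‖ ≤ ε * Bmet Ψ n z ξ

variable {Ψ : ℝ → ℝ}

lemma cd2 (h : ContDiff ℝ 3 Ψ) : ContDiff ℝ 2 (deriv Ψ) := by
  have h' : ContDiff ℝ (2+1) Ψ := by norm_num; exact h
  exact (contDiff_succ_iff_deriv.mp h').2.2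

lemma cd1 (h : ContDiff ℝ 3 Ψ) : ContDiff ℝ 1 (deriv (deriv Ψ)) := by
  have h' : ContDiff ℝ (1+1) (deriv Ψ) := by norm_num; exact cd2 h
  exact (contDiff_succ_iff_deriv.mp h').2.2

lemma psi2_hasDeriv (h : ContDiff ℝ 3 Ψ) (x : ℝ) :
    HasDerivAt (deriv (deriv Ψ)) (deriv (deriv (deriv Ψ)) x) x :=
  (((cd1 h).differentiable one_ne_zero) x).hasDerivAt

lemma psi1_hasDeriv (h : ContDiff ℝ 3 Ψ) (x : ℝ) :
    HasDerivAt (deriv Ψ) (deriv (deriv Ψ) x) x :=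
  (((cd2 h).differentiable (by norm_num)) x).hasDerivAt

lemma phi_hasDeriv (h : ContDiff ℝ 3 Ψ) (x : ℝ) :
    HasDerivAt (Phi Ψ) (deriv Ψ x + x * deriv (deriv Ψ) x) x := by
  have : HasDerivAt (Phi Ψ) _ x := (hasDerivAt_id' x).mul (psi1_hasDeriv h x)
  simpa [Phi, add_comm] using this

lemma deriv_phi (h : ContDiff ℝ 3 Ψ) :
    deriv (Phi Ψ) = fun x => deriv Ψ x + x * deriv (deriv Ψ) x :=
  funext fun x => (phi_hasDeriv h x).deriv

lemma derivphi_hasDeriv (h : ContDiff ℝ 3 Ψ) (x : ℝ) :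
    HasDerivAt (deriv (Phi Ψ)) (2 * deriv (deriv Ψ) x + x * deriv (deriv (deriv Ψ)) x) x := by
  rw [deriv_phi h]
  have h1 : HasDerivAt (fun y => deriv Ψ y + y * deriv (deriv Ψ) y) _ x :=
    (psi1_hasDeriv h x).add ((hasDerivAt_id' x).mul (psi2_hasDeriv h x))
  convert h1 using 1
  ring

lemma deriv2_phi (h : ContDiff ℝ 3 Ψ) (x : ℝ) :
    deriv (deriv (Phi Ψ)) x = 2 * deriv (deriv Ψ) x + x * deriv (deriv (deriv Ψ)) x :=
  (derivphi_hasDeriv h x).deriv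

set_option maxHeartbeats 2000000 in
lemma key_ineq (F : ℝ → ℝ) (c₀ C₁ η t₀ : ℝ)
    (hc₀ : 0 < c₀) (hC₁ : 0 < C₁) (hη : 0 < η) (hη2 : η < 1/2) (ht₀ : 1 ≤ t₀)
    (hFd : ∀ x, t₀ ≤ x → HasDerivAt F (deriv F x) x)
    (hF'd : ∀ x, t₀ ≤ x → HasDerivAt (deriv F) (deriv (deriv F) x) x)
    (hF0 : ∀ t, t₀ ≤ t → 0 ≤ F t)
    (hF1 : ∀ t, t₀ ≤ t → c₀ ≤ deriv F t)
    (hmono : MonotoneOn (deriv F) (Ici t₀))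
    (hstar : ∀ t, t₀ ≤ t → deriv (deriv F) t ≤ C₁ * t ^ (-(1:ℝ)/2) * deriv F t ^ (1+η)) :
    ∃ K : ℝ, 0 < K ∧ ∀ t, 2*t₀ ≤ t → t * deriv F t ≤ K * F t ^ 2 := by
  have ht₀pos : (0:ℝ) < t₀ := lt_of_lt_of_le one_pos ht₀
  have hFpos : ∀ t, t₀ ≤ t → 0 < deriv F t := fun t ht => lt_of_lt_of_le hc₀ (hF1 t ht)
  -- the auxiliary function G
  set G : ℝ → ℝ := fun s => deriv F s ^ (-η) + 2*η*C₁*Real.sqrt s with hG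
  have hGd : ∀ s, t₀ ≤ s → HasDerivAt G
      (deriv (deriv F) s * (-η) * deriv F s ^ (-η - 1) + 2*η*C₁ * (1/(2*Real.sqrt s))) s := by
    intro s hs
    exact ((hF'd s hs).rpow_const (Or.inl (hFpos s hs).ne')).add
      ((Real.hasDerivAt_sqrt (lt_of_lt_of_le ht₀pos hs).ne').const_mul (2*η*C₁))
  have hGmono : MonotoneOn G (Ici t₀) := by
    apply monotoneOn_of_deriv_nonneg (convex_Ici t₀)
    · intro s hs
      exact ((hGd s hs).continuousAt).continuousWithinAt
    · intro s hs
      rw [interior_Ici] at hs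
      exact ((hGd s (le_of_lt hs)).differentiableAt).differentiableWithinAt
    · intro s hs
      rw [interior_Ici] at hs
      have hs' : t₀ ≤ s := le_of_lt hs
      have hspos : (0:ℝ) < s := lt_trans ht₀pos hs
      rw [(hGd s hs').deriv]
      -- key bound
      have h1 : deriv (deriv F) s * deriv F s ^ (-η - 1) ≤ C₁ * s ^ (-(1:ℝ)/2) := by
        have h2 := mul_le_mul_of_nonneg_right (hstar s hs')
          (le_of_lt (Real.rpow_pos_of_pos (hFpos s hs') (-η-1)))
        calc deriv (deriv F) s * deriv F s ^ (-η - 1)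
            ≤ C₁ * s ^ (-(1:ℝ)/2) * deriv F s ^ (1+η) * deriv F s ^ (-η-1) := h2
          _ = C₁ * s ^ (-(1:ℝ)/2) := by
              rw [mul_assoc, ← Real.rpow_add (hFpos s hs')]
              have he : 1 + η + (-η - 1) = 0 := by ring
              rw [he, Real.rpow_zero, mul_one]
      have hsqrt : Real.sqrt s ≠ 0 := (Real.sqrt_pos.2 hspos).ne'
      have hrw : s ^ (-(1:ℝ)/2) = (Real.sqrt s)⁻¹ := by
        rw [Real.sqrt_eq_rpow, ← Real.rpow_neg (le_of_lt hspos)]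
        norm_num
      rw [hrw] at h1
      have h3 : η * (deriv (deriv F) s * deriv F s ^ (-η - 1)) ≤ η * (C₁ * (Real.sqrt s)⁻¹) :=
        mul_le_mul_of_nonneg_left h1 (le_of_lt hη)
      have h4 : 2*η*C₁ * (1/(2*Real.sqrt s)) = η * (C₁ * (Real.sqrt s)⁻¹) := by
        field_simp
      rw [h4]
      nlinarith [h3]
  -- constants
  set β : ℝ := (2:ℝ) ^ (-(1/η)) with hβ
  have hβpos : 0 < β := Real.rpow_pos_of_pos two_pos _
  set m : ℝ := (min c₀ 1) ^ (1 - 2*η) with hm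
  have hminpos : (0:ℝ) < min c₀ 1 := lt_min hc₀ one_pos
  have hmpos : 0 < m := Real.rpow_pos_of_pos hminpos _
  set c₃ : ℝ := β / (2*η*C₁) with hc₃
  have hc₃pos : 0 < c₃ := by positivity
  set K₁ : ℝ := 2 / (β^2 * c₀) with hK₁
  set K₂ : ℝ := 1 / (c₃^2 * m) with hK₂
  have hK₁pos : 0 < K₁ := by positivity
  have hK₂pos : 0 < K₂ := by positivity
  refine ⟨max K₁ K₂, lt_of_lt_of_le hK₁pos (le_max_left _ _), ?_⟩
  intro t ht
  have ht2 : t₀ ≤ t/2 := by linarith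
  have ht' : t₀ ≤ t := by linarith
  have htpos : 0 < t := lt_of_lt_of_le ht₀pos ht'
  set v := deriv F t with hv
  have hvpos : 0 < v := hFpos t ht'
  have hvc : c₀ ≤ v := hF1 t ht'
  set δ : ℝ := min (t/2) (v ^ (-η) * Real.sqrt t / (2*η*C₁)) with hδ
  have hδpos : 0 < δ := lt_min (by linarith) (by positivity)
  have hδle : δ ≤ t/2 := min_le_left _ _
  set a : ℝ := t - δ with ha
  have hat₀ : t₀ ≤ a := by simp only [ha]; linarith
  have halt : a < t := by simp only [ha]; linarith
  have hha : t/2 ≤ a := by simp only [ha]; linarith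
  have hapos : 0 < a := lt_of_lt_of_le ht₀pos hat₀
  -- step 1 : deriv F a is comparable to v
  have hGle : G a ≤ G t := hGmono (mem_Ici.2 hat₀) (mem_Ici.2 ht') (le_of_lt halt)
  have hstep1 : deriv F a ^ (-η) ≤ v ^ (-η) + 2*η*C₁*(Real.sqrt t - Real.sqrt a) := by
    simp only [hG] at hGle
    linarith [hGle]
  have hsa : 0 < Real.sqrt a := Real.sqrt_pos.2 hapos
  have hst : 0 < Real.sqrt t := Real.sqrt_pos.2 htpos
  have hsale : Real.sqrt a ≤ Real.sqrt t := Real.sqrt_le_sqrt (le_of_lt halt)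
  -- sqrt t - sqrt a ≤ δ / (2 * sqrt a)
  have hsqdiff : Real.sqrt t - Real.sqrt a ≤ δ / (2 * Real.sqrt a) := by
    rw [le_div_iff₀ (by positivity)]
    nlinarith [Real.sq_sqrt (le_of_lt htpos), Real.sq_sqrt (le_of_lt hapos)]
  -- sqrt a ≥ sqrt t / 2
  have hsat : Real.sqrt t / 2 ≤ Real.sqrt a := by
    have h4 : t ≤ 4*a := by linarith
    have h5 := Real.sqrt_le_sqrt h4
    rw [Real.sqrt_mul (by norm_num : (0:ℝ) ≤ 4) a,
      show Real.sqrt 4 = 2 by rw [show (4:ℝ) = 2^2 by norm_num, Real.sqrt_sq (by norm_num : (0:ℝ) ≤ 2)]] at h5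
    linarith
  -- hence 2ηC₁(√t-√a) ≤ 2ηC₁ δ/√t ≤ v^{-η}
  have hstep2 : deriv F a ^ (-η) ≤ 2 * v ^ (-η) := by
    have hb1 : δ / (2*Real.sqrt a) ≤ δ / Real.sqrt t := by
      apply div_le_div_of_nonneg_left (le_of_lt hδpos) hst
      linarith
    have hb2 : 2*η*C₁*(Real.sqrt t - Real.sqrt a) ≤ 2*η*C₁*(δ/Real.sqrt t) :=
      mul_le_mul_of_nonneg_left (le_trans hsqdiff hb1) (by positivity)
    have hδ2 : δ ≤ v ^ (-η) * Real.sqrt t / (2*η*C₁) := min_le_right _ _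
    have hb3 : 2*η*C₁*(δ/Real.sqrt t) ≤ v ^ (-η) := by
      have h7 : 2*η*C₁*δ ≤ v ^ (-η) * Real.sqrt t :=
        calc 2*η*C₁*δ ≤ 2*η*C₁*(v ^ (-η) * Real.sqrt t / (2*η*C₁)) :=
              mul_le_mul_of_nonneg_left hδ2 (by positivity)
          _ = v ^ (-η) * Real.sqrt t := by field_simp
      calc 2*η*C₁*(δ/Real.sqrt t) = (2*η*C₁*δ)/Real.sqrt t := by ring
        _ ≤ (v ^ (-η) * Real.sqrt t)/Real.sqrt t := by gcongr
        _ = v ^ (-η) := by field_simp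
    linarith
  -- invert: β * v ≤ deriv F a
  have hβv : β * v ≤ deriv F a := by
    have h2v : 2 * v ^ (-η) = (β * v) ^ (-η) := by
      rw [Real.mul_rpow (le_of_lt hβpos) (le_of_lt hvpos), hβ, ← Real.rpow_mul (by norm_num : (0:ℝ) ≤ 2)]
      rw [show -(1/η) * -η = 1 by field_simp, Real.rpow_one]
    rw [h2v] at hstep2
    exact (Real.rpow_le_rpow_iff_of_neg (hFpos a hat₀) (by positivity) (by linarith)).1 hstep2
  -- MVT : F t ≥ β v δ
  have hFt : β * v * δ ≤ F t := by
    obtain ⟨c, hc, hceq⟩ := exists_hasDerivAt_eq_slope F (deriv F) halt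
      (fun x hx => ((hFd x (le_trans hat₀ hx.1)).continuousAt).continuousWithinAt)
      (fun x hx => hFd x (le_trans hat₀ (le_of_lt hx.1)))
    have hca : deriv F a ≤ deriv F c :=
      hmono (mem_Ici.2 hat₀) (mem_Ici.2 (le_trans hat₀ (le_of_lt hc.1))) (le_of_lt hc.1)
    have hslope : deriv F a * (t - a) ≤ F t - F a := by
      have h6 : deriv F a ≤ (F t - F a) / (t - a) := hceq ▸ hca
      rw [le_div_iff₀ (by linarith : (0:ℝ) < t - a)] at h6
      linarith
    have hFa := hF0 a hat₀
    have hta : t - a = δ := by simp only [ha]; ring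
    rw [hta] at hslope
    linarith [mul_le_mul_of_nonneg_right hβv (le_of_lt hδpos)]
  -- case split on the min
  have hsq : Real.sqrt t ^ 2 = t := Real.sq_sqrt (le_of_lt htpos)
  rcases le_total (t/2) (v ^ (-η) * Real.sqrt t / (2*η*C₁)) with hcase | hcase
  · -- δ = t/2
    have hδeq : δ = t/2 := min_eq_left hcase
    rw [hδeq] at hFt
    have h8 : (β * v * (t/2))^2 ≤ F t ^ 2 := by
      apply pow_le_pow_left₀ (by positivity) hFt
    have h9 : K₁ * (β * v * (t/2))^2 = (t*v) * (t*v) / (2*c₀) := by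
      rw [hK₁]; field_simp
    have h10 : 2*c₀ ≤ t*v := by nlinarith
    have h11 : t * v ≤ K₁ * F t ^ 2 := by
      have h12 : (t*v) * (2*c₀) ≤ (t*v) * (t*v) := by
        apply mul_le_mul_of_nonneg_left h10 (by positivity)
      have h13 : t*v ≤ (t*v)*(t*v)/(2*c₀) := by
        rw [le_div_iff₀ (by positivity)]; linarith
      calc t*v ≤ (t*v)*(t*v)/(2*c₀) := h13
        _ = K₁ * (β * v * (t/2))^2 := h9.symm
        _ ≤ K₁ * F t ^ 2 := mul_le_mul_of_nonneg_left h8 (le_of_lt hK₁pos)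
    exact le_trans h11 (mul_le_mul_of_nonneg_right (le_max_left _ _) (by positivity))
  · -- δ = v^{-η}√t/(2ηC₁)
    have hδeq : δ = v ^ (-η) * Real.sqrt t / (2*η*C₁) := min_eq_right hcase
    have hFt2 : c₃ * v ^ (1-η) * Real.sqrt t ≤ F t := by
      have he1 : β * v * δ = c₃ * v ^ (1-η) * Real.sqrt t := by
        rw [hδeq, hc₃]
        have he2 : v * v ^ (-η) = v ^ (1-η) := by
          rw [show v * v ^ (-η) = v ^ (1:ℝ) * v ^ (-η) by rw [Real.rpow_one],
            ← Real.rpow_add hvpos]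
          ring_nf
        field_simp
        rw [← he2]
      linarith [he1 ▸ hFt]
    have h8 : (c₃ * v ^ (1-η) * Real.sqrt t)^2 ≤ F t ^ 2 := by
      apply pow_le_pow_left₀ (by positivity) hFt2
    have h9 : (c₃ * v ^ (1-η) * Real.sqrt t)^2 = c₃^2 * v ^ (2-2*η) * t := by
      have he3 : (v ^ (1-η))^2 = v ^ (2-2*η) := by
        rw [← Real.rpow_natCast (v ^ (1-η)) 2, ← Real.rpow_mul (le_of_lt hvpos)]
        norm_num; ring_nf
      rw [mul_pow, mul_pow, hsq, he3]
    have h10 : m * v ≤ v ^ (2-2*η) := by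
      have he4 : v ^ (2-2*η) = v ^ (1-2*η) * v := by
        rw [show v ^ (2-2*η) = v ^ ((1-2*η) + 1) by ring_nf, Real.rpow_add hvpos, Real.rpow_one]
      have he5 : m ≤ v ^ (1-2*η) := by
        rw [hm]
        apply Real.rpow_le_rpow (le_of_lt hminpos) (le_trans (min_le_left _ _) hvc) (by linarith)
      rw [he4]
      exact mul_le_mul_of_nonneg_right he5 (le_of_lt hvpos)
    have h11 : t * v ≤ K₂ * F t ^ 2 := by
      have h12 : K₂ * (c₃^2 * (m * v) * t) = t * v := by
        rw [hK₂]; field_simp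
      calc t*v = K₂ * (c₃^2 * (m*v) * t) := h12.symm
        _ ≤ K₂ * (c₃^2 * v ^ (2-2*η) * t) := by
            apply mul_le_mul_of_nonneg_left _ (le_of_lt hK₂pos)
            apply mul_le_mul_of_nonneg_right _ (le_of_lt htpos)
            exact mul_le_mul_of_nonneg_left h10 (by positivity)
        _ = K₂ * (c₃ * v ^ (1-η) * Real.sqrt t)^2 := by rw [h9]
        _ ≤ K₂ * F t ^ 2 := mul_le_mul_of_nonneg_left h8 (le_of_lt hK₂pos)
    exact le_trans h11 (mul_le_mul_of_nonneg_right (le_max_right _ _) (by positivity))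


/-- The estimate `Ψ''(y) ≲ [Ψ'(y)]²`, equivalently `Φ(t) ≳ t^{1/2}[Φ'(t)]^{1/2}`,
valid under condition (⋆). -/
theorem psi_second_deriv_bound (Ψ : ℝ → ℝ) (hΨ : IsLogGrowth Ψ)
    (hstar : ∃ η : ℝ, η < 1/2 ∧ StarCond Ψ η) :
    (∃ C : ℝ, 0 < C ∧ ∀ y : ℝ, 0 ≤ y → deriv (deriv Ψ) y ≤ C * deriv Ψ y ^ 2) ∧
    (∃ C : ℝ, 0 < C ∧ ∀ᶠ t in atTop,
      Real.sqrt t * Real.sqrt (deriv (Phi Ψ) t) ≤ C * Phi Ψ t) := by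
  obtain ⟨η, hη2, hSC⟩ := hstar
  have hC := hΨ.contDiff
  set c₀ := deriv Ψ 0 with hc₀def
  have hc₀ : 0 < c₀ := hΨ.deriv_pos 0 le_rfl
  -- monotonicity of Ψ', Ψ'', Φ' on [0,∞)
  have hmono1 : MonotoneOn (deriv Ψ) (Ici 0) := by
    apply monotoneOn_of_deriv_nonneg (convex_Ici 0) ((cd2 hC).continuous.continuousOn)
      (((cd2 hC).differentiable (by norm_num)).differentiableOn)
    intro x hx; rw [interior_Ici] at hx; exact hΨ.deriv2_nonneg x (le_of_lt hx)
  have hmono2 : MonotoneOn (deriv (deriv Ψ)) (Ici 0) := by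
    apply monotoneOn_of_deriv_nonneg (convex_Ici 0) ((cd1 hC).continuous.continuousOn)
      (((cd1 hC).differentiable one_ne_zero).differentiableOn)
    intro x hx; rw [interior_Ici] at hx; exact hΨ.deriv3_nonneg x (le_of_lt hx)
  have hmono3 : MonotoneOn (deriv (Phi Ψ)) (Ici 0) := by
    apply monotoneOn_of_deriv_nonneg (convex_Ici 0)
    · intro x _; exact ((derivphi_hasDeriv hC x).continuousAt).continuousWithinAt
    · intro x _; exact ((derivphi_hasDeriv hC x).differentiableAt).differentiableWithinAt
    · intro x hx; rw [interior_Ici] at hx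
      rw [deriv2_phi hC x]
      have h1 := hΨ.deriv2_nonneg x (le_of_lt hx)
      have h2 := hΨ.deriv3_nonneg x (le_of_lt hx)
      nlinarith [mul_nonneg (le_of_lt hx) h2]
  have hΨ'low : ∀ t : ℝ, 0 ≤ t → c₀ ≤ deriv Ψ t := fun t ht =>
    hmono1 (mem_Ici.2 le_rfl) (mem_Ici.2 ht) ht
  have hΦ'low : ∀ t : ℝ, 0 ≤ t → c₀ ≤ deriv (Phi Ψ) t := by
    intro t ht
    rw [deriv_phi hC]
    have h1 := hΨ'low t ht
    have h2 := mul_nonneg ht (hΨ.deriv2_nonneg t ht)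
    simp only []
    linarith
  -- extract a pointwise bound from the big-O hypothesis
  obtain ⟨c, hc⟩ := hSC.bound
  rw [Filter.eventually_atTop] at hc
  obtain ⟨T, hT⟩ := hc
  set t₀ := max T 1 with ht₀def
  have ht₀1 : (1:ℝ) ≤ t₀ := le_max_right T 1
  have ht₀pos : (0:ℝ) < t₀ := lt_of_lt_of_le one_pos ht₀1
  set η₁ := max η (1/4) with hη₁def
  have hη₁pos : 0 < η₁ := lt_of_lt_of_le (by norm_num) (le_max_right η (1/4))
  have hη₁lt : η₁ < 1/2 := max_lt hη2 (by norm_num)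
  set c₁ := min c₀ 1 with hc₁def
  have hc₁pos : 0 < c₁ := lt_min hc₀ one_pos
  set C₂ := max c 1 * c₁ ^ (η - η₁) with hC₂def
  have hC₂pos : 0 < C₂ :=
    mul_pos (lt_of_lt_of_le one_pos (le_max_right c 1)) (Real.rpow_pos_of_pos hc₁pos _)
  have hptw : ∀ t, t₀ ≤ t →
      deriv (deriv (Phi Ψ)) t ≤ C₂ * t ^ (-(1:ℝ)/2) * deriv (Phi Ψ) t ^ (1+η₁) := by
    intro t ht
    have ht1 : (1:ℝ) ≤ t := le_trans ht₀1 ht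
    have htpos : (0:ℝ) < t := lt_of_lt_of_le one_pos ht1
    have hΦ'pos : 0 < deriv (Phi Ψ) t := lt_of_lt_of_le hc₀ (hΦ'low t (le_of_lt htpos))
    have hb := hT t (le_trans (le_max_left T 1) ht)
    rw [Real.norm_eq_abs, Real.norm_eq_abs] at hb
    have h2 : |t ^ (-(1:ℝ)/2) * deriv (Phi Ψ) t ^ (1+η)|
        = t ^ (-(1:ℝ)/2) * deriv (Phi Ψ) t ^ (1+η) :=
      abs_of_nonneg (mul_nonneg (Real.rpow_nonneg (le_of_lt htpos) _)
        (Real.rpow_nonneg (le_of_lt hΦ'pos) _))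
    rw [h2] at hb
    have h1 : deriv (deriv (Phi Ψ)) t ≤ c * (t ^ (-(1:ℝ)/2) * deriv (Phi Ψ) t ^ (1+η)) :=
      le_trans (le_abs_self _) hb
    have h3 : deriv (Phi Ψ) t ^ (1+η) ≤ c₁ ^ (η - η₁) * deriv (Phi Ψ) t ^ (1+η₁) := by
      have e : (1+η) = (1+η₁) + (η - η₁) := by ring
      rw [e, Real.rpow_add hΦ'pos, mul_comm (c₁ ^ (η - η₁))]
      apply mul_le_mul_of_nonneg_left _ (Real.rpow_nonneg (le_of_lt hΦ'pos) _)
      exact Real.rpow_le_rpow_of_nonpos hc₁pos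
        (le_trans (min_le_left _ _) (hΦ'low t (le_of_lt htpos)))
        (by simp only [sub_nonpos, hη₁def]; exact le_max_left η (1/4))
    calc deriv (deriv (Phi Ψ)) t
        ≤ c * (t ^ (-(1:ℝ)/2) * deriv (Phi Ψ) t ^ (1+η)) := h1
      _ ≤ max c 1 * (t ^ (-(1:ℝ)/2) * deriv (Phi Ψ) t ^ (1+η)) := by
          apply mul_le_mul_of_nonneg_right (le_max_left c 1)
          exact mul_nonneg (Real.rpow_nonneg (le_of_lt htpos) _)
            (Real.rpow_nonneg (le_of_lt hΦ'pos) _)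
      _ ≤ max c 1 * (t ^ (-(1:ℝ)/2) * (c₁ ^ (η - η₁) * deriv (Phi Ψ) t ^ (1+η₁))) := by
          apply mul_le_mul_of_nonneg_left _ (le_of_lt (lt_of_lt_of_le one_pos (le_max_right c 1)))
          exact mul_le_mul_of_nonneg_left h3 (Real.rpow_nonneg (le_of_lt htpos) _)
      _ = C₂ * t ^ (-(1:ℝ)/2) * deriv (Phi Ψ) t ^ (1+η₁) := by rw [hC₂def]; ring
  -- apply the key inequality
  obtain ⟨K, hK, hKb⟩ := key_ineq (Phi Ψ) c₀ C₂ η₁ t₀ hc₀ hC₂pos hη₁pos hη₁lt ht₀1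
    (fun x _ => ((phi_hasDeriv hC x).differentiableAt).hasDerivAt)
    (fun x _ => ((derivphi_hasDeriv hC x).differentiableAt).hasDerivAt)
    (fun t ht => mul_nonneg (le_trans (le_of_lt ht₀pos) ht)
      (le_of_lt (hΨ.deriv_pos t (le_trans (le_of_lt ht₀pos) ht))))
    (fun t ht => hΦ'low t (le_trans (le_of_lt ht₀pos) ht))
    (hmono3.mono (Ici_subset_Ici.2 (le_of_lt ht₀pos))) hptw
  have hPhinn : ∀ t : ℝ, 0 ≤ t → 0 ≤ Phi Ψ t := fun t ht =>
    mul_nonneg ht (le_of_lt (hΨ.deriv_pos t ht))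
  constructor
  · -- first claim
    set M := deriv (deriv Ψ) (2*t₀) with hMdef
    have hM0 : 0 ≤ M := hΨ.deriv2_nonneg _ (by linarith)
    refine ⟨max K (M / c₀^2), lt_of_lt_of_le hK (le_max_left _ _), ?_⟩
    intro y hy
    have hΨ'y : c₀ ≤ deriv Ψ y := hΨ'low y hy
    have hΨ'sq : c₀^2 ≤ deriv Ψ y ^ 2 := by nlinarith
    rcases le_total y (2*t₀) with hcase | hcase
    · have h1 : deriv (deriv Ψ) y ≤ M :=
        hmono2 (mem_Ici.2 hy) (mem_Ici.2 (by linarith)) hcase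
      have h2 : M = (M / c₀^2) * c₀^2 := by field_simp
      calc deriv (deriv Ψ) y ≤ M := h1
        _ = (M / c₀^2) * c₀^2 := h2
        _ ≤ max K (M / c₀^2) * deriv Ψ y ^ 2 :=
            mul_le_mul (le_max_right _ _) hΨ'sq (by positivity)
              (le_trans (le_of_lt hK) (le_max_left _ _))
    · have hy0 : 0 < y := lt_of_lt_of_le (by linarith) hcase
      have hkey := hKb y hcase
      have h1 : y * (y * deriv (deriv Ψ) y) ≤ y * deriv (Phi Ψ) y := by
        apply mul_le_mul_of_nonneg_left _ (le_of_lt hy0)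
        rw [deriv_phi hC]
        have := hΨ'low y (le_of_lt hy0)
        simp only []
        linarith
      have h2 : K * Phi Ψ y ^ 2 = K * (y * deriv Ψ y)^2 := rfl
      have h3 : y^2 * deriv (deriv Ψ) y ≤ y^2 * (K * deriv Ψ y ^ 2) := by nlinarith [h1, hkey]
      have h4 : deriv (deriv Ψ) y ≤ K * deriv Ψ y ^ 2 :=
        (mul_le_mul_iff_right₀ (by positivity)).1 h3
      exact le_trans h4 (mul_le_mul_of_nonneg_right (le_max_left _ _) (sq_nonneg _))
  · -- second claim
    refine ⟨Real.sqrt K, Real.sqrt_pos.2 hK, ?_⟩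
    rw [Filter.eventually_atTop]
    refine ⟨2*t₀, fun t ht => ?_⟩
    have htpos : (0:ℝ) < t := lt_of_lt_of_le (by linarith) ht
    calc Real.sqrt t * Real.sqrt (deriv (Phi Ψ) t)
        = Real.sqrt (t * deriv (Phi Ψ) t) := (Real.sqrt_mul (le_of_lt htpos) _).symm
      _ ≤ Real.sqrt (K * Phi Ψ t ^ 2) := Real.sqrt_le_sqrt (hKb t ht)
      _ = Real.sqrt K * Real.sqrt (Phi Ψ t ^ 2) := Real.sqrt_mul (le_of_lt hK) _
      _ = Real.sqrt K * Phi Ψ t := by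
          rw [Real.sqrt_sq (hPhinn t (le_of_lt htpos))]

end FockHankel
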